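/- Let P : ℂ → ℂ be a monic polynomial of degree D ≥ 2 with Green's function G. Then there exist R > 0 and an injective holomorphic function B on the region U = {z ∈ ℂ : |z| > R} (the Böttcher coordinate of P) such that B(z)/z → 1 as z → ∞, B(P(z)) = (B(z))^D for every z ∈ U with P(z) ∈ U, and log |B(z)| = G(z) for every z ∈ U. -/

import Mathlib

open Filter Topology Polynomial Set Metric

namespace BottcherAux

noncomputable def Complex.abs : AbsoluteValue ℂ ℝ := IsAbsoluteValue.toAbsoluteValue (norm : ℂ → ℝ)

lemma Complex.norm_eq_abs (z : ℂ) : ‖z‖ = Complex.abs z := rfl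

lemma Complex.abs_exp (z : ℂ) : Complex.abs (Complex.exp z) = Real.exp z.re := Complex.norm_exp z

lemma Complex.abs_re_le_abs (z : ℂ) : |z.re| ≤ Complex.abs z := Complex.abs_re_le_norm z

lemma Complex.abs_exp_sub_one_le {x : ℂ} (hx : Complex.abs x ≤ 1) :
    Complex.abs (Complex.exp x - 1) ≤ 2 * Complex.abs x := Complex.norm_exp_sub_one_le hx

lemma Complex.continuous_abs : Continuous fun z : ℂ => Complex.abs z := continuous_norm

variable (P : Polynomial ℂ) (D : ℕ)

noncomputable def A : ℝ := ∑ i ∈ Finset.range D, Complex.abs ((P - Polynomial.X ^ D).coeff i)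

noncomputable def R₀ : ℝ := 16 + 8 * A P D

lemma A_nonneg : 0 ≤ A P D :=
  Finset.sum_nonneg fun _ _ => Complex.abs.nonneg _

lemma R₀_pos : 0 < R₀ P D := by
  have := A_nonneg P D; unfold R₀; linarith

lemma eval_sub_le (hD : 2 ≤ D) (hmonic : P.Monic) (hdeg : P.natDegree = D) {w : ℂ}
    (hw : 1 ≤ Complex.abs w) :
    Complex.abs (P.eval w - w ^ D) ≤ A P D * Complex.abs w ^ (D - 1) := by
  set Q : Polynomial ℂ := P - Polynomial.X ^ D with hQ
  have hev : Q.eval w = P.eval w - w ^ D := by simp [hQ]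
  have hdQ : Q.natDegree < D := by
    rcases eq_or_ne Q 0 with h0 | h0
    · rw [h0]; simpa using (by omega : 0 < D)
    · rw [Polynomial.natDegree_lt_iff_degree_lt h0]
      have : Q.degree < P.degree := by
        apply Polynomial.degree_sub_lt
        · rw [Polynomial.degree_X_pow, Polynomial.degree_eq_natDegree hmonic.ne_zero, hdeg]
        · exact hmonic.ne_zero
        · rw [hmonic.leadingCoeff, Polynomial.leadingCoeff_X_pow]
      rwa [Polynomial.degree_eq_natDegree hmonic.ne_zero, hdeg] at this
  rw [← hev, Polynomial.eval_eq_sum_range' hdQ]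
  calc Complex.abs (∑ i ∈ Finset.range D, Q.coeff i * w ^ i)
      ≤ ∑ i ∈ Finset.range D, Complex.abs (Q.coeff i * w ^ i) := by
        apply Complex.abs.sum_le
    _ ≤ ∑ i ∈ Finset.range D, Complex.abs (Q.coeff i) * Complex.abs w ^ (D - 1) := by
        apply Finset.sum_le_sum
        intro i hi
        rw [map_mul, map_pow]
        have : Complex.abs w ^ i ≤ Complex.abs w ^ (D - 1) :=
          pow_le_pow_right₀ hw (by have := Finset.mem_range.mp hi; omega)
        exact mul_le_mul_of_nonneg_left this (Complex.abs.nonneg _)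
    _ = A P D * Complex.abs w ^ (D - 1) := by rw [← Finset.sum_mul]; rfl

variable {P D}
variable (hD : 2 ≤ D) (hmonic : P.Monic) (hdeg : P.natDegree = D)

omit hD hmonic hdeg in
lemma one_le_abs {w : ℂ} (hw : R₀ P D ≤ Complex.abs w) : 1 ≤ Complex.abs w := by
  have := A_nonneg P D; unfold R₀ at hw; linarith

omit hD hmonic hdeg in
lemma w_ne {w : ℂ} (hw : R₀ P D ≤ Complex.abs w) : w ≠ 0 := by
  intro h; rw [h] at hw; simp at hw; have := A_nonneg P D; unfold R₀ at hw; linarith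

include hD hmonic hdeg

lemma delta_sub_one_le {w : ℂ} (hw : R₀ P D ≤ Complex.abs w) :
    Complex.abs (P.eval w / w ^ D - 1) ≤ A P D / Complex.abs w := by
  have h1 : 1 ≤ Complex.abs w := one_le_abs hw
  have hne : w ≠ 0 := w_ne hw
  have key : P.eval w / w ^ D - 1 = (P.eval w - w ^ D) / w ^ D := by
    field_simp
  rw [key, map_div₀, map_pow, div_le_div_iff₀ (by positivity) (by positivity)]
  calc Complex.abs (P.eval w - w ^ D) * Complex.abs w
      ≤ A P D * Complex.abs w ^ (D - 1) * Complex.abs w := by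
        exact mul_le_mul_of_nonneg_right (eval_sub_le P D hD hmonic hdeg h1) (by positivity)
    _ = A P D * Complex.abs w ^ D := by
        rw [mul_assoc, ← pow_succ]
        congr 2
        omega

lemma delta_sub_one_le' {w : ℂ} (hw : R₀ P D ≤ Complex.abs w) :
    Complex.abs (P.eval w / w ^ D - 1) ≤ 1 / 8 := by
  refine (delta_sub_one_le hD hmonic hdeg hw).trans ?_
  rw [div_le_div_iff₀ (lt_of_lt_of_le (R₀_pos P D) hw) (by norm_num)]
  have := A_nonneg P D; unfold R₀ at hw; linarith

lemma abs_eval_ge {w : ℂ} (hw : R₀ P D ≤ Complex.abs w) :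
    8 * Complex.abs w ≤ Complex.abs (P.eval w) := by
  have h1 : 1 ≤ Complex.abs w := one_le_abs hw
  have hA := A_nonneg P D
  have hRw : 16 + 8 * A P D ≤ Complex.abs w := hw
  have h2 : Complex.abs w ≤ Complex.abs w ^ (D - 1) := le_self_pow₀ h1 (by omega)
  have h3 : Complex.abs (P.eval w - w ^ D) ≤ A P D * Complex.abs w ^ (D - 1) :=
    eval_sub_le P D hD hmonic hdeg h1
  have hp : Complex.abs w ^ (D - 1) * Complex.abs w = Complex.abs w ^ D := by
    rw [← pow_succ]; congr 1; omega
  have h5 : Complex.abs w ^ D - Complex.abs (P.eval w - w ^ D) ≤ Complex.abs (P.eval w) := by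
    have hn : Complex.abs (w ^ D) - Complex.abs (w ^ D - P.eval w)
        ≤ Complex.abs (w ^ D - (w ^ D - P.eval w)) := by
      simpa [Complex.norm_eq_abs] using norm_sub_norm_le (w ^ D) (w ^ D - P.eval w)
    rw [sub_sub_cancel] at hn
    rw [Complex.abs.map_sub (w ^ D)] at hn
    rw [map_pow] at hn
    linarith
  nlinarith [mul_nonneg (sub_nonneg.mpr h2) (by linarith : (0:ℝ) ≤ Complex.abs w - A P D - 16),
    mul_nonneg (by linarith : (0:ℝ) ≤ Complex.abs w) (by linarith : (0:ℝ) ≤ Complex.abs w - A P D - 16)]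


lemma region_mapsto {w : ℂ} (hw : R₀ P D ≤ Complex.abs w) : R₀ P D ≤ Complex.abs (P.eval w) := by
  have h8 := abs_eval_ge hD hmonic hdeg hw
  have h1 := one_le_abs hw
  linarith

lemma log_delta_le {w : ℂ} (hw : R₀ P D ≤ Complex.abs w) :
    Complex.abs (Complex.log (P.eval w / w ^ D)) ≤ 2 * A P D / Complex.abs w := by
  set u : ℂ := P.eval w / w ^ D - 1 with hu
  have h8 : Complex.abs u ≤ 1 / 8 := delta_sub_one_le' hD hmonic hdeg hw
  have hA : Complex.abs u ≤ A P D / Complex.abs w := delta_sub_one_le hD hmonic hdeg hw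
  have hawpos : 0 < Complex.abs w := lt_of_lt_of_le (R₀_pos P D) hw
  have key : P.eval w / w ^ D = 1 + u := by rw [hu]; ring
  rw [key]
  have h32 := Complex.norm_log_one_add_half_le_self (z := u) (by
    rw [Complex.norm_eq_abs]; linarith)
  rw [Complex.norm_eq_abs, Complex.norm_eq_abs] at h32
  refine h32.trans ?_
  rw [mul_div_assoc]
  nlinarith [div_nonneg (A_nonneg P D) hawpos.le, Complex.abs.nonneg u]

lemma delta_mem_slitPlane {w : ℂ} (hw : R₀ P D ≤ Complex.abs w) :
    P.eval w / w ^ D ∈ Complex.slitPlane := by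
  have h8 : Complex.abs (P.eval w / w ^ D - 1) ≤ 1 / 8 := delta_sub_one_le' hD hmonic hdeg hw
  rw [Complex.mem_slitPlane_iff]
  left
  have habs := Complex.abs_re_le_abs (P.eval w / w ^ D - 1)
  have hre : (P.eval w / w ^ D - 1).re = (P.eval w / w ^ D).re - 1 := by simp
  rw [hre] at habs
  have := abs_le.mp (habs.trans h8)
  linarith [this.1]

lemma delta_ne_zero {w : ℂ} (hw : R₀ P D ≤ Complex.abs w) : P.eval w / w ^ D ≠ 0 :=
  Complex.slitPlane_ne_zero (delta_mem_slitPlane hD hmonic hdeg hw)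

/-- escape of iterates -/
lemma iterate_ge {z : ℂ} (hz : R₀ P D ≤ Complex.abs z) (n : ℕ) :
    8 ^ n * Complex.abs z ≤ Complex.abs ((fun w => P.eval w)^[n] z) ∧
      R₀ P D ≤ Complex.abs ((fun w => P.eval w)^[n] z) := by
  induction n with
  | zero => simpa using hz
  | succ n ih =>
    rw [Function.iterate_succ_apply']
    obtain ⟨h1, h2⟩ := ih
    have h8 := abs_eval_ge hD hmonic hdeg h2
    constructor
    · have : (8:ℝ) ^ (n+1) * Complex.abs z = 8 * (8 ^ n * Complex.abs z) := by ring
      rw [this]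
      calc 8 * (8 ^ n * Complex.abs z) ≤ 8 * Complex.abs ((fun w => P.eval w)^[n] z) := by
            linarith
        _ ≤ _ := h8
    · exact region_mapsto hD hmonic hdeg h2


variable (P D) in
/-- terms of the series defining the Böttcher log-correction -/
noncomputable def cf (n : ℕ) (z : ℂ) : ℂ :=
  ((D : ℂ) ^ (n + 1))⁻¹ *
    Complex.log (P.eval ((fun w => P.eval w)^[n] z) / ((fun w => P.eval w)^[n] z) ^ D)

variable (P D) in
noncomputable def LL (z : ℂ) : ℂ := ∑' n, cf P D n z

variable (P D) in
noncomputable def BB (z : ℂ) : ℂ := z * Complex.exp (LL P D z)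

include hD hmonic hdeg

lemma norm_cf_le {z : ℂ} (hz : R₀ P D ≤ Complex.abs z) (n : ℕ) :
    ‖cf P D n z‖ ≤ 2 * A P D / Complex.abs z * (1 / 2) ^ (n + 1) := by
  obtain ⟨h8, hreg⟩ := iterate_ge hD hmonic hdeg hz n
  have hzpos : 0 < Complex.abs z := lt_of_lt_of_le (R₀_pos P D) hz
  have hfn : Complex.abs z ≤ Complex.abs ((fun w => P.eval w)^[n] z) := by
    nlinarith [one_le_pow₀ (by norm_num : (1:ℝ) ≤ 8) (n := n)]
  have hfpos : 0 < Complex.abs ((fun w => P.eval w)^[n] z) := lt_of_lt_of_le hzpos hfn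
  have hlog := log_delta_le hD hmonic hdeg hreg
  have hinv : ‖((D : ℂ) ^ (n + 1))⁻¹‖ ≤ (1 / 2 : ℝ) ^ (n + 1) := by
    rw [norm_inv, norm_pow, Complex.norm_natCast]
    rw [one_div, ← inv_pow]
    gcongr
    exact_mod_cast hD
  rw [cf, norm_mul]
  calc ‖((D : ℂ) ^ (n + 1))⁻¹‖ * ‖Complex.log _‖
      ≤ (1 / 2 : ℝ) ^ (n + 1) * (2 * A P D / Complex.abs z) := by
        apply mul_le_mul hinv ?_ (norm_nonneg _) (by positivity)
        rw [Complex.norm_eq_abs]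
        refine hlog.trans ?_
        apply div_le_div_of_nonneg_left ?_ hzpos hfn
        linarith [A_nonneg P D]
    _ = 2 * A P D / Complex.abs z * (1 / 2) ^ (n + 1) := by ring


lemma summable_cf {z : ℂ} (hz : R₀ P D ≤ Complex.abs z) : Summable (fun n => cf P D n z) := by
  apply Summable.of_norm_bounded (g := fun n => 2 * A P D / Complex.abs z * (1 / 2) ^ (n + 1))
  · apply Summable.mul_left
    exact (summable_geometric_of_lt_one (by norm_num) (by norm_num)).comp_injective
      (add_left_injective 1)
  · exact norm_cf_le hD hmonic hdeg hz

omit hD hmonic hdeg in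
lemma tsum_half_pow : ∑' n : ℕ, ((1 : ℝ) / 2) ^ (n + 1) = 1 := by
  have h : ∑' n : ℕ, ((1 : ℝ) / 2) ^ (n + 1) = ∑' n : ℕ, (1/2) * (1 / 2 : ℝ) ^ n := by
    apply tsum_congr; intro n; ring
  rw [h, tsum_mul_left, tsum_geometric_of_lt_one (by norm_num) (by norm_num)]
  norm_num

lemma norm_LL_le {z : ℂ} (hz : R₀ P D ≤ Complex.abs z) :
    ‖LL P D z‖ ≤ 2 * A P D / Complex.abs z := by
  have hs := summable_cf hD hmonic hdeg hz
  have hb : Summable (fun n : ℕ => 2 * A P D / Complex.abs z * (1 / 2) ^ (n + 1)) := by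
    apply Summable.mul_left
    exact (summable_geometric_of_lt_one (by norm_num) (by norm_num)).comp_injective
      (add_left_injective 1)
  calc ‖LL P D z‖ ≤ ∑' n, ‖cf P D n z‖ := norm_tsum_le_tsum_norm (hs.norm)
    _ ≤ ∑' n, 2 * A P D / Complex.abs z * (1 / 2) ^ (n + 1) :=
        Summable.tsum_le_tsum (norm_cf_le hD hmonic hdeg hz) hs.norm hb
    _ = 2 * A P D / Complex.abs z * 1 := by rw [tsum_mul_left, tsum_half_pow]
    _ = 2 * A P D / Complex.abs z := by ring

lemma diff_cf (n : ℕ) : DifferentiableOn ℂ (cf P D n) {z : ℂ | R₀ P D < Complex.abs z} := by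
  intro z hz
  have hz' : R₀ P D ≤ Complex.abs z := le_of_lt hz
  apply DifferentiableAt.differentiableWithinAt
  have hiter : Differentiable ℂ (fun w : ℂ => (fun w => P.eval w)^[n] w) := by
    induction n with
    | zero => simpa using differentiable_id
    | succ n ih =>
      rw [Function.iterate_succ']
      exact (P.differentiable).comp ih
  obtain ⟨h8, hreg⟩ := iterate_ge hD hmonic hdeg hz' n
  have hne : ((fun w => P.eval w)^[n] z) ^ D ≠ 0 := pow_ne_zero _ (w_ne hreg)
  have hd : DifferentiableAt ℂ
      (fun w : ℂ => P.eval ((fun w => P.eval w)^[n] w) / ((fun w => P.eval w)^[n] w) ^ D) z := by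
    apply DifferentiableAt.div
    · exact (P.differentiable.comp hiter).differentiableAt
    · exact ((hiter.pow D)).differentiableAt
    · exact hne
  apply DifferentiableAt.const_mul
  exact (Complex.differentiableAt_log (delta_mem_slitPlane hD hmonic hdeg hreg)).comp z hd

omit hD hmonic hdeg in
lemma isOpen_region : IsOpen {z : ℂ | R₀ P D < Complex.abs z} := by
  have : Continuous fun z : ℂ => Complex.abs z := Complex.continuous_abs
  exact isOpen_lt continuous_const this

lemma diff_LL : DifferentiableOn ℂ (LL P D) {z : ℂ | R₀ P D < Complex.abs z} := by
  apply Complex.differentiableOn_tsum_of_summable_norm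
      (u := fun n : ℕ => 2 * A P D / R₀ P D * (1 / 2) ^ (n + 1))
  · apply Summable.mul_left
    exact (summable_geometric_of_lt_one (by norm_num) (by norm_num)).comp_injective
      (add_left_injective 1)
  · exact diff_cf hD hmonic hdeg
  · exact isOpen_region
  · intro n z hz
    refine (norm_cf_le hD hmonic hdeg (le_of_lt hz) n).trans ?_
    gcongr
    · linarith [A_nonneg P D]
    · exact R₀_pos P D
    · exact le_of_lt hz

lemma diff_BB : DifferentiableOn ℂ (BB P D) {z : ℂ | R₀ P D < Complex.abs z} := by
  exact (differentiableOn_id).mul ((diff_LL hD hmonic hdeg).cexp)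


lemma D_mul_LL {z : ℂ} (hz : R₀ P D ≤ Complex.abs z) :
    (D : ℂ) * LL P D z = Complex.log (P.eval z / z ^ D) + LL P D (P.eval z) := by
  have hs := summable_cf hD hmonic hdeg hz
  have hD0 : (D : ℂ) ≠ 0 := by
    simp only [ne_eq, Nat.cast_eq_zero]; omega
  set g : ℕ → ℂ := fun n => ((D : ℂ) ^ n)⁻¹ *
    Complex.log (P.eval ((fun w => P.eval w)^[n] z) / ((fun w => P.eval w)^[n] z) ^ D) with hgdef
  have hg : ∀ n, (D : ℂ) * cf P D n z = g n := by
    intro n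
    rw [cf, hgdef, ← mul_assoc]
    congr 1
    rw [pow_succ, mul_inv]
    field_simp
  have hsum_g : Summable g := by
    have := hs.mul_left (D : ℂ)
    exact this.congr hg
  calc (D : ℂ) * LL P D z = ∑' n, (D : ℂ) * cf P D n z := by rw [LL, tsum_mul_left]
    _ = ∑' n, g n := tsum_congr hg
    _ = g 0 + ∑' n, g (n + 1) := Summable.tsum_eq_zero_add hsum_g
    _ = Complex.log (P.eval z / z ^ D) + LL P D (P.eval z) := by
        have hg0 : g 0 = Complex.log (P.eval z / z ^ D) := by simp [hgdef]
        have hgs : ∑' n, g (n + 1) = LL P D (P.eval z) := by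
          rw [LL]
          apply tsum_congr
          intro n
          simp only [hgdef, cf, Function.iterate_succ_apply]
        rw [hg0, hgs]

lemma funct_eq {z : ℂ} (hz : R₀ P D ≤ Complex.abs z) :
    BB P D (P.eval z) = BB P D z ^ D := by
  have hzne : z ≠ 0 := w_ne hz
  have hzD : z ^ D ≠ 0 := pow_ne_zero _ hzne
  rw [BB, BB, mul_pow, ← Complex.exp_nat_mul, D_mul_LL hD hmonic hdeg hz, Complex.exp_add,
    Complex.exp_log (delta_ne_zero hD hmonic hdeg hz)]
  field_simp

lemma tendsto_logabs {z : ℂ} (hz : R₀ P D ≤ Complex.abs z) :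
    Tendsto (fun n : ℕ => ((D : ℝ) ^ n)⁻¹ *
        Real.log (Complex.abs ((fun w => P.eval w)^[n] z))) atTop
      (𝓝 (Real.log (Complex.abs (BB P D z)))) := by
  have hD0 : (D : ℝ) ≠ 0 := by
    simp only [ne_eq, Nat.cast_eq_zero]; omega
  set a : ℕ → ℝ := fun n => ((D : ℝ) ^ n)⁻¹ *
    Real.log (Complex.abs ((fun w => P.eval w)^[n] z)) with hadef
  have hs := summable_cf hD hmonic hdeg hz
  have hre : HasSum (fun n => (cf P D n z).re) ((LL P D z).re) :=
    hs.hasSum.mapL Complex.reCLM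
  have key : ∀ n, (cf P D n z).re = a (n + 1) - a n := by
    intro n
    set w := (fun w => P.eval w)^[n] z with hwdef
    have hwreg : R₀ P D ≤ Complex.abs w := (iterate_ge hD hmonic hdeg hz n).2
    have hw1 : (fun w => P.eval w)^[n + 1] z = P.eval w := by
      rw [Function.iterate_succ_apply']
    have hwne : Complex.abs w ≠ 0 := Complex.abs.ne_zero (w_ne hwreg)
    have hevne : Complex.abs (P.eval w) ≠ 0 := by
      have := abs_eval_ge hD hmonic hdeg hwreg
      have := R₀_pos P D
      intro h
      nlinarith [lt_of_lt_of_le (R₀_pos P D) hwreg]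
    have hcast : ((D : ℂ) ^ (n + 1))⁻¹ = ((((D : ℝ) ^ (n + 1))⁻¹ : ℝ) : ℂ) := by
      push_cast
      ring
    rw [cf, hcast, Complex.re_ofReal_mul, Complex.log_re, Complex.norm_eq_abs, map_div₀, map_pow,
      Real.log_div hevne (pow_ne_zero _ hwne), Real.log_pow]
    rw [hadef]
    simp only [hw1]
    have hDpow : ((D : ℝ) ^ (n + 1))⁻¹ * ((D : ℕ) * Real.log (Complex.abs w))
        = ((D : ℝ) ^ n)⁻¹ * Real.log (Complex.abs w) := by
      rw [pow_succ, mul_inv]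
      field_simp
    rw [mul_sub, hDpow]
  have htend : Tendsto (fun N => a N - a 0) atTop (𝓝 ((LL P D z).re)) := by
    have := hre.tendsto_sum_nat
    have heq : ∀ N, ∑ n ∈ Finset.range N, (cf P D n z).re = a N - a 0 := by
      intro N
      rw [← Finset.sum_range_sub a N]
      exact Finset.sum_congr rfl fun n _ => key n
    simpa only [heq] using this
  have ha0 : a 0 = Real.log (Complex.abs z) := by simp [hadef]
  have hlog : Real.log (Complex.abs (BB P D z)) = (LL P D z).re + a 0 := by
    rw [BB, map_mul, Complex.abs_exp,
      Real.log_mul (Complex.abs.ne_zero (w_ne hz)) (Real.exp_ne_zero _), Real.log_exp, ha0]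
    ring
  rw [hlog]
  have := htend.add_const (a 0)
  simpa using this

lemma deriv_LL_le {z : ℂ} (hz : 2 * R₀ P D ≤ Complex.abs z) :
    ‖deriv (LL P D) z‖ ≤ 9 * A P D / Complex.abs z ^ 2 := by
  have hR0 := R₀_pos P D
  have hzpos : 0 < Complex.abs z := by linarith
  set r : ℝ := Complex.abs z / 3 with hrdef
  have hr : 0 < r := by positivity
  have habs : ∀ w : ℂ, dist w z ≤ r → 2 / 3 * Complex.abs z ≤ Complex.abs w := by
    intro w hw
    have h1 : Complex.abs z - Complex.abs w ≤ dist w z := by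
      rw [dist_comm, Complex.dist_eq]
      simpa [Complex.norm_eq_abs] using norm_sub_norm_le z w
    rw [hrdef] at hw
    linarith
  have hsub : closedBall z r ⊆ {w : ℂ | R₀ P D < Complex.abs w} := by
    intro w hw
    have := habs w (mem_closedBall.mp hw)
    simp only [mem_setOf_eq]
    nlinarith
  have hd : DiffContOnCl ℂ (LL P D) (ball z r) := by
    apply DifferentiableOn.diffContOnCl
    rw [closure_ball z hr.ne']
    exact (diff_LL hD hmonic hdeg).mono hsub
  have hC : ∀ w ∈ sphere z r, ‖LL P D w‖ ≤ 3 * A P D / Complex.abs z := by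
    intro w hw
    have hw' : 2 / 3 * Complex.abs z ≤ Complex.abs w :=
      habs w (le_of_eq (mem_sphere.mp hw))
    have hwreg : R₀ P D ≤ Complex.abs w := by nlinarith
    refine (norm_LL_le hD hmonic hdeg hwreg).trans ?_
    rw [div_le_div_iff₀ (by nlinarith) (by positivity)]
    nlinarith [A_nonneg P D]
  have := Complex.norm_deriv_le_of_forall_mem_sphere_norm_le hr hd hC
  refine this.trans (le_of_eq ?_)
  rw [hrdef]
  field_simp
  ring


omit hD hmonic hdeg in
lemma tendsto_abs_cobounded : Tendsto (fun z : ℂ => Complex.abs z) (Bornology.cobounded ℂ) atTop := by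
  exact tendsto_norm_cobounded_atTop (E := ℂ)

lemma tendsto_BB_div : Tendsto (fun z : ℂ => BB P D z / z) (Bornology.cobounded ℂ) (𝓝 1) := by
  have hnorm := tendsto_abs_cobounded
  have hbound : Tendsto (fun z : ℂ => 2 * A P D / Complex.abs z) (Bornology.cobounded ℂ) (𝓝 0) :=
    tendsto_const_nhds.div_atTop hnorm
  have hev : ∀ᶠ z : ℂ in Bornology.cobounded ℂ, ‖LL P D z‖ ≤ 2 * A P D / Complex.abs z := by
    filter_upwards [hnorm.eventually_ge_atTop (R₀ P D)] with z hz
    exact norm_LL_le hD hmonic hdeg hz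
  have hLL : Tendsto (LL P D) (Bornology.cobounded ℂ) (𝓝 0) := squeeze_zero_norm' hev hbound
  have hexp : Tendsto (fun z : ℂ => Complex.exp (LL P D z)) (Bornology.cobounded ℂ) (𝓝 1) := by
    have := (Complex.continuous_exp.tendsto 0).comp hLL
    simpa [Function.comp_def] using this
  apply hexp.congr'
  filter_upwards [hnorm.eventually_ge_atTop 1] with z hz
  have hzne : z ≠ 0 := by
    intro h; rw [h] at hz; simp at hz; linarith
  rw [BB, mul_comm, mul_div_assoc, div_self hzne, mul_one]

variable (P D) in
noncomputable def RR : ℝ := 3 * R₀ P D + 200 * A P D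

omit hD hmonic hdeg in
lemma R₀_lt_RR : R₀ P D < RR P D := by
  have h1 := R₀_pos P D; have h2 := A_nonneg P D
  unfold RR; linarith

omit hD hmonic hdeg in
lemma RR_pos : 0 < RR P D := lt_trans (R₀_pos P D) (R₀_lt_RR)

lemma BB_hasDeriv {w : ℂ} (hw : R₀ P D < Complex.abs w) :
    HasDerivAt (BB P D) (Complex.exp (LL P D w) * (1 + w * deriv (LL P D) w)) w := by
  have hL : HasDerivAt (LL P D) (deriv (LL P D) w) w :=
    (((diff_LL hD hmonic hdeg).differentiableAt ((isOpen_region).mem_nhds hw))).hasDerivAt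
  have hexp : HasDerivAt (fun y : ℂ => Complex.exp (LL P D y))
      (Complex.exp (LL P D w) * deriv (LL P D) w) w := hL.cexp
  have h2 := (hasDerivAt_id w).mul hexp
  have h3 : (1 : ℂ) * Complex.exp (LL P D w) + w * (Complex.exp (LL P D w) * deriv (LL P D) w)
      = Complex.exp (LL P D w) * (1 + w * deriv (LL P D) w) := by ring
  simp only [id] at h2
  rw [h3] at h2
  show HasDerivAt (fun y : ℂ => y * Complex.exp (LL P D y))
    (Complex.exp (LL P D w) * (1 + w * deriv (LL P D) w)) w
  exact h2

lemma deriv_bound {w : ℂ} (hw : 3 * RR P D ≤ 4 * Complex.abs w) :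
    ‖Complex.exp (LL P D w) * (1 + w * deriv (LL P D) w) - 1‖ ≤ 1 / 2 := by
  have hR0 := R₀_pos P D
  have hA := A_nonneg P D
  have hRR : RR P D = 3 * R₀ P D + 200 * A P D := rfl
  set aw := Complex.abs w with hawdef
  have haw : 9 / 4 * R₀ P D + 150 * A P D ≤ aw := by rw [hRR] at hw; linarith
  have hawpos : 0 < aw := by linarith
  have hw2 : 2 * R₀ P D ≤ aw := by linarith
  have hwreg : R₀ P D ≤ aw := by linarith
  have hLw : ‖LL P D w‖ ≤ 2 * A P D / aw := norm_LL_le hD hmonic hdeg hwreg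
  have hsmall : 2 * A P D / aw ≤ 1 := by
    rw [div_le_one hawpos]; linarith
  have hexp1 : ‖Complex.exp (LL P D w) - 1‖ ≤ 2 * (2 * A P D / aw) := by
    have := Complex.abs_exp_sub_one_le (x := LL P D w) (by
      rw [← Complex.norm_eq_abs]; linarith)
    rw [← Complex.norm_eq_abs, ← Complex.norm_eq_abs] at this
    nlinarith [norm_nonneg (LL P D w)]
  have hexpnorm : ‖Complex.exp (LL P D w)‖ ≤ 3 := by
    rw [Complex.norm_eq_abs, Complex.abs_exp]
    have h1 : (LL P D w).re ≤ 1 := by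
      have := Complex.abs_re_le_abs (LL P D w)
      rw [← Complex.norm_eq_abs] at this
      have := abs_le.mp (this.trans (hLw.trans hsmall))
      linarith [this.2]
    calc Real.exp (LL P D w).re ≤ Real.exp 1 := Real.exp_le_exp.mpr h1
      _ ≤ 3 := by linarith [Real.exp_one_lt_d9.le]
  have hderiv : ‖deriv (LL P D) w‖ ≤ 9 * A P D / aw ^ 2 := deriv_LL_le hD hmonic hdeg hw2
  have hkey : Complex.exp (LL P D w) * (1 + w * deriv (LL P D) w) - 1
      = (Complex.exp (LL P D w) - 1) + Complex.exp (LL P D w) * (w * deriv (LL P D) w) := by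
    ring
  rw [hkey]
  have hterm2 : ‖Complex.exp (LL P D w) * (w * deriv (LL P D) w)‖ ≤ 27 * A P D / aw := by
    have hnw : ‖w‖ = aw := Complex.norm_eq_abs w
    rw [norm_mul, norm_mul, hnw]
    calc ‖Complex.exp (LL P D w)‖ * (aw * ‖deriv (LL P D) w‖)
        ≤ 3 * (aw * (9 * A P D / aw ^ 2)) := by
          apply mul_le_mul hexpnorm ?_ (by positivity) (by norm_num)
          exact mul_le_mul_of_nonneg_left hderiv hawpos.le
      _ = 27 * A P D / aw := by field_simp; ring
  calc ‖(Complex.exp (LL P D w) - 1) + Complex.exp (LL P D w) * (w * deriv (LL P D) w)‖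
      ≤ ‖Complex.exp (LL P D w) - 1‖ + ‖Complex.exp (LL P D w) * (w * deriv (LL P D) w)‖ :=
        norm_add_le _ _
    _ ≤ 2 * (2 * A P D / aw) + 27 * A P D / aw := by linarith
    _ = 31 * A P D / aw := by ring
    _ ≤ 1 / 2 := by
        rw [div_le_iff₀ hawpos]; linarith

lemma BB_inj : Set.InjOn (BB P D) {z : ℂ | RR P D < Complex.abs z} := by
  intro z1 h1 z2 h2 hB
  simp only [mem_setOf_eq] at h1 h2
  have hR0 := R₀_pos P D
  have hA := A_nonneg P D
  have hRR : RR P D = 3 * R₀ P D + 200 * A P D := rfl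
  have hRRpos := RR_pos (P := P) (D := D)
  have h1' : R₀ P D ≤ Complex.abs z1 := le_of_lt (lt_trans (R₀_lt_RR) h1)
  have h2' : R₀ P D ≤ Complex.abs z2 := le_of_lt (lt_trans (R₀_lt_RR) h2)
  have hz2pos : 0 < Complex.abs z2 := lt_trans hRRpos h2
  have hB' : z1 * Complex.exp (LL P D z1) = z2 * Complex.exp (LL P D z2) := hB
  -- step 1 : z1 - z2 is small compared to z2
  have hz1eq : z1 = z2 * Complex.exp (LL P D z2 - LL P D z1) := by
    rw [Complex.exp_sub, ← mul_div_assoc, eq_div_iff (Complex.exp_ne_zero _)]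
    exact hB'
  have hΔ : ‖LL P D z2 - LL P D z1‖ ≤ 4 * A P D / RR P D := by
    have e1 := norm_LL_le hD hmonic hdeg h1'
    have e2 := norm_LL_le hD hmonic hdeg h2'
    have e1' : 2 * A P D / Complex.abs z1 ≤ 2 * A P D / RR P D :=
      div_le_div_of_nonneg_left (by linarith) hRRpos (le_of_lt h1)
    have e2' : 2 * A P D / Complex.abs z2 ≤ 2 * A P D / RR P D :=
      div_le_div_of_nonneg_left (by linarith) hRRpos (le_of_lt h2)
    calc ‖LL P D z2 - LL P D z1‖ ≤ ‖LL P D z2‖ + ‖LL P D z1‖ := norm_sub_le _ _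
      _ ≤ 2 * A P D / RR P D + 2 * A P D / RR P D := by linarith
      _ = 4 * A P D / RR P D := by ring
  have hΔ1 : ‖LL P D z2 - LL P D z1‖ ≤ 1 := by
    refine hΔ.trans ?_
    rw [div_le_one hRRpos]; linarith
  have hdiff : ‖z1 - z2‖ ≤ Complex.abs z2 / 4 := by
    have hexpd := Complex.abs_exp_sub_one_le (x := LL P D z2 - LL P D z1) (by
      rw [← Complex.norm_eq_abs]; exact hΔ1)
    rw [← Complex.norm_eq_abs, ← Complex.norm_eq_abs] at hexpd
    have heq : z1 - z2 = z2 * (Complex.exp (LL P D z2 - LL P D z1) - 1) := by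
      conv_lhs => rw [hz1eq]
      ring
    rw [heq, norm_mul, Complex.norm_eq_abs z2]
    have h8 : ‖Complex.exp (LL P D z2 - LL P D z1) - 1‖ ≤ 8 * A P D / RR P D := by
      refine hexpd.trans ?_
      calc 2 * ‖LL P D z2 - LL P D z1‖ ≤ 2 * (4 * A P D / RR P D) := by linarith
        _ = 8 * A P D / RR P D := by ring
    have h14 : 8 * A P D / RR P D ≤ 1 / 4 := by
      rw [div_le_div_iff₀ hRRpos (by norm_num)]; linarith
    calc Complex.abs z2 * ‖Complex.exp (LL P D z2 - LL P D z1) - 1‖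
        ≤ Complex.abs z2 * (1 / 4) := by nlinarith
      _ = Complex.abs z2 / 4 := by ring
  -- step 2 : mean value estimate on the segment
  have hseg : ∀ w ∈ segment ℝ z1 z2,
      3 * RR P D ≤ 4 * Complex.abs w ∧ R₀ P D < Complex.abs w := by
    intro w hw
    obtain ⟨a, b, ha, hb, hab, hw⟩ := hw
    have hwz2 : w - z2 = a • (z1 - z2) := by
      rw [← hw]
      have hb' : b = 1 - a := by linarith
      rw [hb']
      module
    have hnw : ‖w - z2‖ ≤ ‖z1 - z2‖ := by
      rw [hwz2, norm_smul, Real.norm_eq_abs, abs_of_nonneg ha]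
      nlinarith [norm_nonneg (z1 - z2)]
    have hlow : Complex.abs z2 - Complex.abs z2 / 4 ≤ Complex.abs w := by
      have htri : Complex.abs z2 - Complex.abs w ≤ ‖w - z2‖ := by
        rw [← Complex.norm_eq_abs, ← Complex.norm_eq_abs, ← norm_sub_rev]
        exact norm_sub_norm_le z2 w
      linarith [hnw.trans hdiff, htri]
    constructor
    · nlinarith
    · rw [hRR] at h2; nlinarith
  set f : ℂ → ℂ := fun w => BB P D w - w with hfdef
  have hder : ∀ w ∈ segment ℝ z1 z2,
      HasDerivWithinAt f (Complex.exp (LL P D w) * (1 + w * deriv (LL P D) w) - 1)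
        (segment ℝ z1 z2) w := by
    intro w hw
    exact ((BB_hasDeriv hD hmonic hdeg (hseg w hw).2).sub (hasDerivAt_id w)).hasDerivWithinAt
  have hbnd : ∀ w ∈ segment ℝ z1 z2,
      ‖Complex.exp (LL P D w) * (1 + w * deriv (LL P D) w) - 1‖ ≤ 1 / 2 := fun w hw =>
    deriv_bound hD hmonic hdeg (hseg w hw).1
  have hmvt := (convex_segment z1 z2).norm_image_sub_le_of_norm_hasDerivWithin_le
    hder hbnd (left_mem_segment ℝ z1 z2) (right_mem_segment ℝ z1 z2)
  have hfz : f z2 - f z1 = z1 - z2 := by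
    rw [hfdef]
    simp only
    rw [hB]
    ring
  rw [hfz, norm_sub_rev (z2 : ℂ)] at hmvt
  have : ‖z1 - z2‖ ≤ 0 := by linarith
  have := le_antisymm this (norm_nonneg _)
  rwa [norm_eq_zero, sub_eq_zero] at this

end BottcherAux

open BottcherAux in
/-- Existence of the Böttcher coordinate near infinity: an injective
holomorphic map `B` on `{|z| > R}` with `B(z)/z → 1` at `∞`, conjugating `P` to
`w ↦ w^D`, and satisfying `log |B(z)| = G(z)`. -/
theorem bottcher_coordinate_exists (D : ℕ) (hD : 2 ≤ D) (P : Polynomial ℂ)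
    (hmonic : P.Monic) (hdeg : P.natDegree = D) (G : ℂ → ℝ)
    (hG : ∀ z : ℂ, Tendsto (fun n : ℕ =>
        (1 / (D : ℝ) ^ n) *
          max (Real.log ‖(fun w => P.eval w)^[n] z‖) 0)
      atTop (𝓝 (G z))) :
    ∃ R : ℝ, 0 < R ∧ ∃ B : ℂ → ℂ,
      Set.InjOn B {z : ℂ | R < ‖z‖} ∧
      DifferentiableOn ℂ B {z : ℂ | R < ‖z‖} ∧
      Tendsto (fun z : ℂ => B z / z) (Bornology.cobounded ℂ) (𝓝 1) ∧
      (∀ z : ℂ, R < ‖z‖ → R < ‖P.eval z‖ →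
        B (P.eval z) = (B z) ^ D) ∧
      (∀ z : ℂ, R < ‖z‖ → Real.log ‖B z‖ = G z) := by
  refine ⟨RR P D, RR_pos, BB P D, BB_inj hD hmonic hdeg, ?_, tendsto_BB_div hD hmonic hdeg,
    ?_, ?_⟩
  · apply (diff_BB hD hmonic hdeg).mono
    intro z hz
    exact lt_trans (R₀_lt_RR) hz
  · intro z hz _
    exact funct_eq hD hmonic hdeg (le_of_lt (lt_trans (R₀_lt_RR) hz))
  · intro z hz
    have hz' : R₀ P D ≤ Complex.abs z := le_of_lt (lt_trans (R₀_lt_RR) hz)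
    have h1 := tendsto_logabs hD hmonic hdeg hz'
    have h2 : Tendsto (fun n : ℕ => ((D : ℝ) ^ n)⁻¹ *
        Real.log (Complex.abs ((fun w => P.eval w)^[n] z))) atTop (𝓝 (G z)) := by
      have heq : (fun n : ℕ => (1 / (D : ℝ) ^ n) *
          max (Real.log ‖(fun w => P.eval w)^[n] z‖) 0)
          = (fun n : ℕ => ((D : ℝ) ^ n)⁻¹ *
          Real.log (Complex.abs ((fun w => P.eval w)^[n] z))) := by
        funext n
        have hfn : 1 ≤ ‖(fun w => P.eval w)^[n] z‖ :=
          one_le_abs (iterate_ge hD hmonic hdeg hz' n).2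
        rw [max_eq_left (Real.log_nonneg hfn), one_div]
        rfl
      rw [← heq]
      exact hG z
    exact tendsto_nhds_unique h1 h2
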